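/- arXiv:1806.00332 — 9 statements merged into one kernel-verified Lean document; each statement's English description precedes it below -/
import Mathlib

section
/- Let Z be a set, let D ⊆ 𝒫(ω) and E_m ⊆ 𝒫(ω) for each m ∈ ω. Then there exists F ⊆ 𝒫(ω) such that for all A_0, A_1, … ⊆ Z, if B_m = H_{E_m}(A_{⟨m,0⟩}, A_{⟨m,1⟩}, …) (where ⟨·,·⟩ is a fixed pairing bijection ω×ω → ω), then H_D(B_0, B_1, …) = H_F(A_0, A_1, …). In other words, compositions of Hausdorff operations are Hausdorff operations. -/
/-- The Hausdorff operation determined by `D ⊆ 𝒫(ω)`. -/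
def hausdorffOp {Z : Type*} (D : Set (Set ℕ)) (A : ℕ → Set Z) : Set Z :=
  {x | {n | x ∈ A n} ∈ D}

/-- Compositions of Hausdorff operations are Hausdorff operations. -/
theorem stmt1 {Z : Type*} (D : Set (Set ℕ)) (E : ℕ → Set (Set ℕ)) (π : ℕ × ℕ ≃ ℕ) :
    ∃ F : Set (Set ℕ), ∀ A : ℕ → Set Z,
      hausdorffOp D (fun m => hausdorffOp (E m) (fun n => A (π (m, n)))) =
        hausdorffOp F A := by
  refine ⟨{S | {m | {n | π (m, n) ∈ S} ∈ E m} ∈ D}, fun A => ?_⟩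
  ext x
  simp [hausdorffOp]
end

section
/- Let Z ⊆ ω^ω and let ρ: ω^ω → Z be a retraction (a continuous function with ρ restricted to Z equal to the identity). Fix A, B ⊆ Z. Then A is Wadge-reducible to B in Z if and only if ρ⁻¹[A] is Wadge-reducible to ρ⁻¹[B] in ω^ω. -/
/-- Wadge reducibility: `A ≤ B` in `Z` iff `A = f ⁻¹' B` for some continuous `f : Z → Z`. -/
def WadgeLE {Z : Type*} [TopologicalSpace Z] (A B : Set Z) : Prop :=
  ∃ f : Z → Z, Continuous f ∧ A = f ⁻¹' B

theorem stmt3 (Z : Set (ℕ → ℕ)) (ρ : (ℕ → ℕ) → Z) (hρ : Continuous ρ)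
    (hret : ∀ z : Z, ρ z.val = z) (A B : Set Z) :
    WadgeLE A B ↔ WadgeLE (ρ ⁻¹' A) (ρ ⁻¹' B) := by
  constructor
  · rintro ⟨f, hf, rfl⟩
    refine ⟨fun x => (f (ρ x)).val, (continuous_subtype_val.comp (hf.comp hρ)), ?_⟩
    ext x
    simp [hret (f (ρ x))]
  · rintro ⟨g, hg, hAB⟩
    refine ⟨fun z => ρ (g z.val), (hρ.comp hg).comp continuous_subtype_val, ?_⟩
    ext z
    have : z.val ∈ ρ ⁻¹' A ↔ z.val ∈ g ⁻¹' (ρ ⁻¹' B) := by rw [hAB]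
    simpa [hret z] using this
end

section
/- Let Z be a topological space, let Γ be a Wadge class in Z, and let A ∈ Γ. Then: (1) if Γ ≠ {Z}, then A ∩ V ∈ Γ for every clopen V ⊆ Z; (2) if Γ ≠ {∅}, then A ∪ V ∈ Γ for every clopen V ⊆ Z. -/
theorem stmt4 {Z : Type*} [TopologicalSpace Z] (Γ : Set (Set Z))
    (hΓ : ∃ C : Set Z, Γ = {B | WadgeLE B C}) (A : Set Z) (hA : A ∈ Γ) :
    (Γ ≠ {Set.univ} → ∀ V : Set Z, IsClopen V → A ∩ V ∈ Γ) ∧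
    (Γ ≠ {∅} → ∀ V : Set Z, IsClopen V → A ∪ V ∈ Γ) := by
  classical
  obtain ⟨C, rfl⟩ := hΓ
  obtain ⟨g, hg, hgA⟩ := hA
  constructor
  · intro hne V hV
    have hex : ∃ D ∈ {B | WadgeLE B C}, D ≠ Set.univ := by
      by_contra h
      push_neg at h
      apply hne
      apply Set.eq_singleton_iff_unique_mem.mpr
      have hC : C ∈ {B | WadgeLE B C} := ⟨id, continuous_id, rfl⟩
      have hCu : C = Set.univ := h C hC
      exact ⟨hCu ▸ hC, h⟩
    obtain ⟨D, ⟨f, hf, hfD⟩, hDne⟩ := hex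
    have : ∃ z, z ∉ D := by
      by_contra h
      push_neg at h
      exact hDne (Set.eq_univ_of_forall h)
    obtain ⟨z, hz⟩ := this
    have hz' : f z ∉ C := by rw [hfD] at hz; exact hz
    refine ⟨V.piecewise g (fun _ => f z), ?_, ?_⟩
    · exact Continuous.piecewise (by simp [hV.frontier_eq]) hg continuous_const
    · rw [Set.piecewise_preimage]
      ext x
      by_cases hx : x ∈ V <;> simp [Set.ite, hx, hgA, hz']
  · intro hne V hV
    have hex : ∃ D ∈ {B | WadgeLE B C}, D ≠ (∅ : Set Z) := by
      by_contra h
      push_neg at h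
      apply hne
      apply Set.eq_singleton_iff_unique_mem.mpr
      have hC : C ∈ {B | WadgeLE B C} := ⟨id, continuous_id, rfl⟩
      have hCe : C = ∅ := h C hC
      exact ⟨hCe ▸ hC, h⟩
    obtain ⟨D, ⟨f, hf, hfD⟩, hDne⟩ := hex
    obtain ⟨z, hz⟩ := Set.nonempty_iff_ne_empty.mpr hDne
    have hz' : f z ∈ C := by rw [hfD] at hz; exact hz
    refine ⟨V.piecewise (fun _ => f z) g, ?_, ?_⟩
    · exact Continuous.piecewise (by simp [hV.frontier_eq]) continuous_const hg
    · rw [Set.piecewise_preimage]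
      ext x
      by_cases hx : x ∈ V <;> simp [Set.ite, hx, hgA, hz']
end

section
/- Let X be a zero-dimensional homogeneous separable metrizable space. If there exists a non-empty open subset U of X that is Polish (completely metrizable), then X itself is Polish. -/
open Set

/-- Transfer Polishness from the preimage in a bigger subtype to the subset itself. -/
lemma polish_of_nested {X : Type*} [TopologicalSpace X] {V W : Set X} (hVW : V ⊆ W)
    (h : PolishSpace ((Subtype.val : W → X) ⁻¹' V : Set W)) : PolishSpace V := by
  let e : ((Subtype.val : W → X) ⁻¹' V : Set W) ≃ₜ V :=
    { toFun := fun p => ⟨p.1.1, p.2⟩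
      invFun := fun x => ⟨⟨x.1, hVW x.2⟩, x.2⟩
      left_inv := fun p => rfl
      right_inv := fun x => rfl
      continuous_toFun := by
        exact (continuous_subtype_val.comp continuous_subtype_val).subtype_mk _
      continuous_invFun := by
        exact (continuous_subtype_val.subtype_mk _).subtype_mk _ }
  exact e.symm.isClosedEmbedding.polishSpace

theorem stmt5 {X : Type*} [TopologicalSpace X] [TopologicalSpace.MetrizableSpace X]
    [SecondCountableTopology X]
    (hne : Nonempty X)
    (hzd : ∀ x : X, ∀ U : Set X, IsOpen U → x ∈ U → ∃ V : Set X, IsClopen V ∧ x ∈ V ∧ V ⊆ U)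
    (hhom : ∀ x y : X, ∃ h : X ≃ₜ X, h x = y)
    (hU : ∃ U : Set X, IsOpen U ∧ U.Nonempty ∧ PolishSpace U) :
    PolishSpace X := by
  obtain ⟨U, hUo, ⟨u0, hu0⟩, hUP⟩ := hU
  -- every point has a clopen Polish neighborhood
  have key : ∀ x : X, ∃ V : Set X, IsClopen V ∧ x ∈ V ∧ PolishSpace V := by
    intro x
    obtain ⟨h, hh⟩ := hhom u0 x
    have hWo : IsOpen (h '' U) := h.isOpenMap U hUo
    have hxW : x ∈ h '' U := ⟨u0, hu0, hh⟩
    have hWP : PolishSpace (h '' U) := (h.image U).symm.isClosedEmbedding.polishSpace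
    obtain ⟨V, hVclopen, hxV, hVW⟩ := hzd x (h '' U) hWo hxW
    refine ⟨V, hVclopen, hxV, polish_of_nested hVW ?_⟩
    have : IsOpen ((Subtype.val : (h '' U) → X) ⁻¹' V) :=
      hVclopen.2.preimage continuous_subtype_val
    exact this.polishSpace
  choose V hVclopen hxV hVP using key
  -- countable subcover
  obtain ⟨T, hTc, hTU⟩ := TopologicalSpace.isOpen_iUnion_countable V fun x => (hVclopen x).2
  have hTne : T.Nonempty := by
    by_contra hT
    rw [not_nonempty_iff_eq_empty] at hT
    obtain ⟨x⟩ := hne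
    have : x ∈ ⋃ i ∈ T, V i := by
      rw [hTU]; exact mem_iUnion.2 ⟨x, hxV x⟩
    simp [hT] at this
  obtain ⟨f, hf⟩ := hTc.exists_eq_range hTne
  -- disjointify
  set A : ℕ → Set X := fun n => V (f n) \ ⋃ m ∈ Finset.range n, V (f m) with hA
  have hAclopen : ∀ n, IsClopen (A n) :=
    fun n => (hVclopen (f n)).diff (isClopen_biUnion_finset fun m _ => hVclopen (f m))
  have hAsub : ∀ n, A n ⊆ V (f n) := fun n => diff_subset
  have hAP : ∀ n, PolishSpace (A n) := by
    intro n
    refine polish_of_nested (hAsub n) ?_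
    haveI := hVP (f n)
    exact IsOpen.polishSpace ((hAclopen n).2.preimage continuous_subtype_val)
  have hcover : ∀ x : X, ∃ n, x ∈ A n := by
    intro x
    have hx : x ∈ ⋃ i ∈ T, V i := by rw [hTU]; exact mem_iUnion.2 ⟨x, hxV x⟩
    have : ∃ n, x ∈ V (f n) := by
      obtain ⟨i, hiT, hxi⟩ := by simpa using hx
      rw [hf] at hiT
      obtain ⟨n, rfl⟩ := hiT
      exact ⟨n, hxi⟩
    classical
    refine ⟨Nat.find this, Nat.find_spec this, ?_⟩
    simp only [Finset.mem_range, mem_iUnion, not_exists]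
    intro m hm
    exact Nat.find_min this hm
  have hdisj : ∀ m n : ℕ, m ≠ n → ∀ x, x ∈ A m → x ∈ A n → False := by
    intro m n hmn x hxm hxn
    rcases Nat.lt_or_ge m n with h | h
    · exact hxn.2 (mem_biUnion (Finset.mem_range.2 h) hxm.1)
    · have : m > n := lt_of_le_of_ne h (Ne.symm hmn)
      exact hxm.2 (mem_biUnion (Finset.mem_range.2 this) hxn.1)
  -- build the homeomorphism with the sigma type
  haveI : ∀ n, PolishSpace (A n) := hAP
  let σmap : (Σ n, A n) → X := fun p => p.2.1
  have hbij : Function.Bijective σmap := by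
    constructor
    · rintro ⟨m, x, hx⟩ ⟨n, y, hy⟩ hxy
      simp only [σmap] at hxy
      subst hxy
      obtain rfl : m = n := by
        by_contra hmn
        exact hdisj m n hmn x hx hy
      rfl
    · intro x
      obtain ⟨n, hn⟩ := hcover x
      exact ⟨⟨n, x, hn⟩, rfl⟩
  have hcont : Continuous σmap := continuous_sigma fun n => continuous_subtype_val
  have hopen : IsOpenMap σmap := isOpenMap_sigma.2 fun n => (hAclopen n).2.isOpenMap_subtype_val
  let e : (Σ n, A n) ≃ₜ X :=
    Equiv.toHomeomorphOfContinuousOpen (Equiv.ofBijective σmap hbij) hcont hopen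
  exact e.symm.isClosedEmbedding.polishSpace
end

section
/- Let Z be a Polish space and let X be a dense Baire subspace of Z having the Baire property in Z. Then X is comeager in Z. -/
open Set

lemma dense_preimage_val' {Z : Type*} [TopologicalSpace Z] {X t : Set Z} (hd : Dense X)
    (ht : IsOpen t) (htd : Dense t) : Dense (Subtype.val ⁻¹' t : Set X) := by
  rw [dense_iff_inter_open]
  rintro U hU ⟨x, hxU⟩
  obtain ⟨V, hV, rfl⟩ := isOpen_induced_iff.mp hU
  have h1 : (V ∩ t).Nonempty := htd.inter_open_nonempty V hV ⟨x, hxU⟩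
  obtain ⟨y, hy, hyX⟩ := hd.inter_open_nonempty _ (hV.inter ht) h1
  exact ⟨⟨y, hyX⟩, hy.1, hy.2⟩

lemma isMeagre_preimage_val' {Z : Type*} [TopologicalSpace Z] {X S : Set Z} (hd : Dense X)
    (hS : IsMeagre S) : IsMeagre (Subtype.val ⁻¹' S : Set X) := by
  rw [IsMeagre, mem_residual_iff] at hS ⊢
  obtain ⟨T, hTo, hTd, hTc, hTsub⟩ := hS
  refine ⟨(Subtype.val ⁻¹' ·) '' T, ?_, ?_, hTc.image _, ?_⟩
  · rintro _ ⟨t, ht, rfl⟩; exact (hTo t ht).preimage continuous_subtype_val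
  · rintro _ ⟨t, ht, rfl⟩; exact dense_preimage_val' hd (hTo t ht) (hTd t ht)
  · intro x hx
    simp only [sInter_image, mem_iInter₂] at hx
    exact hTsub (fun t ht => hx t ht)

theorem stmt6 {Z : Type*} [TopologicalSpace Z] [PolishSpace Z] (X : Set Z)
    (hdense : Dense X)
    (hBaire : ∀ U : Set X, IsOpen U → U.Nonempty → ¬ IsMeagre U)
    (hBP : ∃ U : Set Z, IsOpen U ∧ IsMeagre (symmDiff X U)) :
    IsMeagre Xᶜ := by
  obtain ⟨U, hUo, hM⟩ := hBP
  have hXU : X \ U ⊆ symmDiff X U := fun x hx => Or.inl hx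
  have hUX : U \ X ⊆ symmDiff X U := fun x hx => Or.inr hx
  -- interior of Uᶜ is empty
  have hint : interior Uᶜ = ∅ := by
    by_contra h
    obtain ⟨z, hz⟩ := nonempty_iff_ne_empty.mpr h
    set V : Set X := Subtype.val ⁻¹' interior Uᶜ with hV
    have hVo : IsOpen V := isOpen_interior.preimage continuous_subtype_val
    have hVne : V.Nonempty := by
      obtain ⟨y, hy, hyX⟩ := hdense.inter_open_nonempty _ isOpen_interior ⟨z, hz⟩
      exact ⟨⟨y, hyX⟩, hy⟩
    refine hBaire V hVo hVne ?_
    have hsub : V ⊆ Subtype.val ⁻¹' symmDiff X U := by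
      rintro ⟨x, hxX⟩ hxV
      exact hXU ⟨hxX, interior_subset hxV⟩
    exact (isMeagre_preimage_val' hdense hM).mono hsub
  have hUd : Dense U := by
    rw [← compl_compl U]
    exact interior_eq_empty_iff_dense_compl.mp hint
  have hUc : IsMeagre Uᶜ := by
    rw [IsMeagre, compl_compl]
    exact residual_of_dense_open hUo hUd
  have : Xᶜ ⊆ Uᶜ ∪ symmDiff X U := by
    intro x hx
    by_cases hxU : x ∈ U
    · exact Or.inr (hUX ⟨hxU, hx⟩)
    · exact Or.inl hxU
  refine IsMeagre.mono this ?_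
  rw [IsMeagre, compl_union]
  exact Filter.inter_mem hUc hM
end

section
/- Let X be a homogeneous separable metrizable space. Then X is either a meager space or a Baire space. -/
theorem stmt7 {X : Type*} [TopologicalSpace X] [TopologicalSpace.MetrizableSpace X]
    [SecondCountableTopology X]
    (hhom : ∀ x y : X, ∃ h : X ≃ₜ X, h x = y) :
    IsMeagre (Set.univ : Set X) ∨
      (∀ U : Set X, IsOpen U → U.Nonempty → ¬ IsMeagre U) := by
  by_cases hB : ∀ U : Set X, IsOpen U → U.Nonempty → ¬ IsMeagre U
  · exact Or.inr hB
  · left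
    push_neg at hB
    obtain ⟨U, hUo, ⟨x, hxU⟩, hUm⟩ := hB
    -- every point has a meager open neighborhood
    have key : ∀ y : X, ∃ V : Set X, IsOpen V ∧ y ∈ V ∧ IsMeagre V := by
      intro y
      obtain ⟨h, hxy⟩ := hhom x y
      refine ⟨h '' U, h.isOpenMap U hUo, ⟨x, hxU, hxy⟩, ?_⟩
      have : Filter.Tendsto h.symm (residual X) (residual X) :=
        tendsto_residual_of_isOpenMap h.symm.continuous h.symm.isOpenMap
      have hmem : h.symm ⁻¹' Uᶜ ∈ residual X := this hUm
      have himg : (h '' U)ᶜ = h.symm ⁻¹' Uᶜ := by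
        rw [show ⇑h '' U = ⇑h.symm ⁻¹' U from h.toEquiv.image_eq_preimage_symm U, Set.preimage_compl]
      rwa [IsMeagre, himg]
    choose V hVo hVmem hVm using key
    have hcov : (⋃ y : X, V y) = Set.univ :=
      Set.eq_univ_of_forall fun y => Set.mem_iUnion.mpr ⟨y, hVmem y⟩
    obtain ⟨T, hTc, hTU⟩ := TopologicalSpace.isOpen_iUnion_countable V hVo
    rcases T.eq_empty_or_nonempty with rfl | hTne
    · simp only [Set.mem_empty_iff_false, Set.iUnion_of_empty, Set.iUnion_empty] at hTU
      rw [← hcov, ← hTU]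
      exact IsMeagre.empty
    · obtain ⟨f, hf⟩ := (Set.countable_iff_exists_surjective hTne).mp hTc
      have : (Set.univ : Set X) ⊆ ⋃ n : ℕ, V (f n) := by
        rw [← hcov, ← hTU]
        intro z hz
        rw [Set.mem_iUnion₂] at hz
        obtain ⟨i, hiT, hzi⟩ := hz
        obtain ⟨n, hn⟩ := hf ⟨i, hiT⟩
        exact Set.mem_iUnion.mpr ⟨n, by rw [hn]; exact hzi⟩
      exact (isMeagre_iUnion fun n => hVm (f n)).mono this
end

section
/- Let X be a bi-Bernstein subset of ℝ. For a Borel subset B of X (Borel in the subspace topology), define μ̄(B) = μ(A) where A is any Borel subset of ℝ with A ∩ X = B and μ is Lebesgue measure. Then μ̄ is well-defined: if A₁, A₂ are Borel subsets of ℝ with A₁ ∩ X = A₂ ∩ X, then μ(A₁) = μ(A₂). -/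
open MeasureTheory

/-- `X ⊆ ℝ` is bi-Bernstein if every copy of the Cantor space in `ℝ` meets
both `X` and its complement. -/
def BiBernstein (X : Set ℝ) : Prop :=
  ∀ K : Set ℝ, Nonempty (K ≃ₜ (ℕ → Bool)) → (K ∩ X).Nonempty ∧ (K ∩ Xᶜ).Nonempty

lemma aux_null (X : Set ℝ) (hX : BiBernstein X) {S : Set ℝ} (hS : MeasurableSet S)
    (hSX : S ∩ X = ∅) : volume S = 0 := by
  by_contra hpos
  have hpos' : (0 : ENNReal) < volume S := pos_iff_ne_zero.2 hpos
  obtain ⟨F, hFS, hFc, hFpos⟩ := hS.exists_lt_isCompact hpos'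
  have hFnc : ¬ F.Countable := fun hc => by
    simp [hc.measure_zero volume] at hFpos
  obtain ⟨f, hfr, hfc, hfi⟩ := hFc.isClosed.exists_nat_bool_injection_of_not_countable hFnc
  -- K := range f is homeomorphic to Cantor space
  set K : Set ℝ := Set.range f with hK
  have hcont : Continuous ((Equiv.ofInjective f hfi) : (ℕ → Bool) → K) := by
    exact Continuous.subtype_mk hfc _
  have e : (ℕ → Bool) ≃ₜ K := hcont.homeoOfEquivCompactToT2 (f := Equiv.ofInjective f hfi)
  have hne : Nonempty (K ≃ₜ (ℕ → Bool)) := ⟨e.symm⟩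
  obtain ⟨⟨x, hxK, hxX⟩, -⟩ := hX K hne
  have hxS : x ∈ S := hFS (hfr hxK)
  exact absurd (Set.mem_inter hxS hxX) (by simp [hSX])

theorem stmt10 (X : Set ℝ) (hX : BiBernstein X)
    (A₁ A₂ : Set ℝ) (h₁ : MeasurableSet A₁) (h₂ : MeasurableSet A₂)
    (h : A₁ ∩ X = A₂ ∩ X) :
    volume A₁ = volume A₂ := by
  have d1 : volume (A₁ \ A₂) = 0 := by
    apply aux_null X hX (h₁.diff h₂)
    ext x
    simp only [Set.mem_inter_iff, Set.mem_diff, Set.mem_empty_iff_false, iff_false]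
    rintro ⟨⟨hx1, hx2⟩, hxX⟩
    exact hx2 (h ▸ Set.mem_inter hx1 hxX : x ∈ A₂ ∩ X).1
  have d2 : volume (A₂ \ A₁) = 0 := by
    apply aux_null X hX (h₂.diff h₁)
    ext x
    simp only [Set.mem_inter_iff, Set.mem_diff, Set.mem_empty_iff_false, iff_false]
    rintro ⟨⟨hx1, hx2⟩, hxX⟩
    exact hx2 (h.symm ▸ Set.mem_inter hx1 hxX : x ∈ A₁ ∩ X).1
  have : A₁ =ᵐ[volume] A₂ := by
    rw [MeasureTheory.ae_eq_set]
    exact ⟨d1, d2⟩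
  exact measure_congr this
end

section
/- Let Z be a topological space and D ⊆ 𝒫(ω). Then there exists a 2^ω-universal set for Γ_D(Z): that is, a set U ⊆ 2^ω × Z with U ∈ Γ_D(2^ω × Z) such that {U_x : x ∈ 2^ω} = Γ_D(Z), where U_x = {y ∈ Z : (x,y) ∈ U}. -/
/-- `Γ_D(Z)`: sets obtained by applying `H_D` to a sequence of open sets. -/
def GammaD {Z : Type*} [TopologicalSpace Z] (D : Set (Set ℕ)) : Set (Set Z) :=
  {S | ∃ A : ℕ → Set Z, (∀ n, IsOpen (A n)) ∧ S = hausdorffOp D A}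

theorem stmt11 {Z : Type*} [TopologicalSpace Z] [TopologicalSpace.MetrizableSpace Z]
    [SecondCountableTopology Z] (D : Set (Set ℕ)) :
    ∃ U : Set ((ℕ → Bool) × Z), U ∈ GammaD D ∧
      ∀ B : Set Z, B ∈ GammaD D ↔ ∃ x : ℕ → Bool, B = {y | (x, y) ∈ U} := by
  classical
  obtain ⟨b, hbc, -, hb⟩ := TopologicalSpace.exists_countable_basis Z
  -- enumerate b ∪ {∅} as B : ℕ → Set Z
  obtain ⟨Bk, hBk⟩ : ∃ f : ℕ → Set Z, b ∪ {∅} = Set.range f :=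
    (hbc.union (Set.countable_singleton _)).exists_eq_range
      (Set.Nonempty.inr ⟨∅, rfl⟩)
  have hBopen : ∀ k, IsOpen (Bk k) := by
    intro k
    have : Bk k ∈ b ∪ {∅} := hBk ▸ Set.mem_range_self k
    rcases this with h | h
    · exact hb.isOpen h
    · simp only [Set.mem_singleton_iff] at h; rw [h]; exact isOpen_empty
  have key : ∀ (V : Set Z), IsOpen V → ∀ y, y ∈ V ↔ ∃ k, Bk k ⊆ V ∧ y ∈ Bk k := by
    intro V hV y
    constructor
    · intro hy
      obtain ⟨s, hs, hys, hsV⟩ := hb.exists_subset_of_mem_open hy hV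
      have : s ∈ Set.range Bk := hBk ▸ Set.mem_union_left _ hs
      obtain ⟨k, rfl⟩ := this
      exact ⟨k, hsV, hys⟩
    · rintro ⟨k, hk, hy⟩; exact hk hy
  -- the universal sequence of open sets
  set A : ℕ → Set ((ℕ → Bool) × Z) :=
    fun n => ⋃ k, {p | p.1 (Nat.pair n k) = true} ∩ (Prod.snd ⁻¹' Bk k) with hA
  have hAopen : ∀ n, IsOpen (A n) := by
    intro n
    apply isOpen_iUnion
    intro k
    apply IsOpen.inter
    · have : ({p | p.1 (Nat.pair n k) = true} : Set ((ℕ → Bool) × Z)) =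
        (fun p : (ℕ → Bool) × Z => p.1 (Nat.pair n k)) ⁻¹' {true} := by
        ext p; simp
      rw [this]
      exact ((continuous_apply _).comp continuous_fst).isOpen_preimage _ (isOpen_discrete _)
    · exact (hBopen k).preimage continuous_snd
  have hmemA : ∀ (x : ℕ → Bool) (y : Z) (n : ℕ),
      (x, y) ∈ A n ↔ ∃ k, x (Nat.pair n k) = true ∧ y ∈ Bk k := by
    intro x y n
    simp [hA]
  refine ⟨hausdorffOp D A, ⟨A, hAopen, rfl⟩, ?_⟩
  intro B
  constructor
  · rintro ⟨A₀, hA₀, rfl⟩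
    refine ⟨fun m => decide (Bk (Nat.unpair m).2 ⊆ A₀ (Nat.unpair m).1), ?_⟩
    ext y
    simp only [hausdorffOp, Set.mem_setOf_eq]
    have : ∀ n, y ∈ A₀ n ↔
        ((fun m => decide (Bk (Nat.unpair m).2 ⊆ A₀ (Nat.unpair m).1)), y) ∈ A n := by
      intro n
      rw [hmemA, key (A₀ n) (hA₀ n) y]
      constructor
      · rintro ⟨k, hk, hy⟩
        exact ⟨k, by simp [Nat.unpair_pair, hk], hy⟩
      · rintro ⟨k, hk, hy⟩
        refine ⟨k, ?_, hy⟩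
        simpa [Nat.unpair_pair] using hk
    constructor <;> intro h <;> [skip; skip] <;>
      · convert h using 2
        ext n
        simp [this n]
  · rintro ⟨x, rfl⟩
    refine ⟨fun n => ⋃ k, if x (Nat.pair n k) = true then Bk k else ∅, ?_, ?_⟩
    · intro n
      apply isOpen_iUnion
      intro k
      split <;> [exact hBopen k; exact isOpen_empty]
    · ext y
      simp only [hausdorffOp, Set.mem_setOf_eq]
      have : ∀ n, (x, y) ∈ A n ↔ y ∈ ⋃ k, if x (Nat.pair n k) = true then Bk k else ∅ := by
        intro n
        rw [hmemA]
        simp only [Set.mem_iUnion]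
        constructor
        · rintro ⟨k, hk, hy⟩; exact ⟨k, by simp [hk, hy]⟩
        · rintro ⟨k, hk⟩
          by_cases h : x (Nat.pair n k) = true
          · simp [h] at hk; exact ⟨k, h, hk⟩
          · simp [h] at hk
      constructor <;> intro h <;>
        · convert h using 2
          ext n
          simp [this n]
end

section
/- Let Z and W be zero-dimensional separable metrizable spaces each containing a homeomorphic copy of the Cantor space 2^ω, and let D, E ⊆ 𝒫(ω). Then Γ_D(Z) ⊆ Γ_E(Z) if and only if Γ_D(W) ⊆ Γ_E(W). -/
open Set TopologicalSpace

/-- A continuous map such that every open set of the domain is a preimage of an open set. -/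
def GoodMap {X Y : Type*} [TopologicalSpace X] [TopologicalSpace Y] (f : X → Y) : Prop :=
  Continuous f ∧ ∀ A : Set X, IsOpen A → ∃ B : Set Y, IsOpen B ∧ f ⁻¹' B = A

lemma preimage_hausdorffOp {X Y : Type*} (f : X → Y) (D : Set (Set ℕ)) (B : ℕ → Set Y) :
    f ⁻¹' hausdorffOp D B = hausdorffOp D (fun n => f ⁻¹' B n) := rfl

lemma goodmap_transfer {X Y : Type*} [TopologicalSpace X] [TopologicalSpace Y]
    {f : X → Y} (hf : GoodMap f) {D E : Set (Set ℕ)}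
    (h : (GammaD D : Set (Set Y)) ⊆ GammaD E) :
    (GammaD D : Set (Set X)) ⊆ GammaD E := by
  rintro S ⟨A, hA, rfl⟩
  choose B hB hBA using fun n => hf.2 (A n) (hA n)
  obtain ⟨B', hB', hEq⟩ := h ⟨B, hB, rfl⟩
  refine ⟨fun n => f ⁻¹' B' n, fun n => (hB' n).preimage hf.1, ?_⟩
  have h1 : hausdorffOp D A = f ⁻¹' hausdorffOp D B := by
    rw [preimage_hausdorffOp]
    simp only [hBA]
  rw [h1, hEq, preimage_hausdorffOp]

/-- A zero-dimensional second countable space admits a good map into Cantor space. -/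
lemma exists_goodmap_to_cantor {Z : Type*} [TopologicalSpace Z] [SecondCountableTopology Z]
    (hzd : ∀ x : Z, ∀ U : Set Z, IsOpen U → x ∈ U → ∃ V : Set Z, IsClopen V ∧ x ∈ V ∧ V ⊆ U) :
    ∃ e : Z → (ℕ → Bool), GoodMap e := by
  classical
  obtain ⟨b, hbc, -, hb⟩ := exists_countable_basis Z
  haveI : Countable b := hbc.to_subtype
  have key : ∀ U : b, ∃ 𝒯 : Set (Set Z), 𝒯.Countable ∧ (∀ V ∈ 𝒯, IsClopen V ∧ V ⊆ (U : Set Z)) ∧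
      (U : Set Z) ⊆ ⋃ V ∈ 𝒯, V := by
    rintro ⟨U, hU⟩
    obtain ⟨T, hTc, hTU⟩ := isOpen_iUnion_countable
      (fun V : {V : Set Z // IsClopen V ∧ V ⊆ U} => (V : Set Z))
      (fun V => V.2.1.isOpen)
    refine ⟨(fun V : {V : Set Z // IsClopen V ∧ V ⊆ U} => (V : Set Z)) '' T,
      hTc.image _, ?_, ?_⟩
    · rintro V ⟨V', -, rfl⟩; exact V'.2
    · intro x hx
      obtain ⟨V, hV, hxV, hVU⟩ := hzd x U (hb.isOpen hU) hx
      have : x ∈ ⋃ V : {V : Set Z // IsClopen V ∧ V ⊆ U}, (V : Set Z) :=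
        mem_iUnion.2 ⟨⟨V, hV, hVU⟩, hxV⟩
      rw [← hTU] at this
      simp only [mem_iUnion] at this ⊢
      obtain ⟨i, hi, hxi⟩ := this
      exact ⟨i, ⟨i, hi, rfl⟩, hxi⟩
  choose 𝒯 h𝒯c h𝒯cl h𝒯U using key
  set 𝒞 : Set (Set Z) := insert ∅ (⋃ U : b, 𝒯 U) with h𝒞
  have h𝒞c : 𝒞.Countable := (countable_iUnion h𝒯c).insert ∅
  have h𝒞cl : ∀ V ∈ 𝒞, IsClopen V := by
    rintro V (rfl | hV)
    · exact isClopen_empty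
    · obtain ⟨U, hVU⟩ := mem_iUnion.1 hV
      exact (h𝒯cl U V hVU).1
  have h𝒞basis : ∀ A : Set Z, IsOpen A → ∀ x ∈ A, ∃ V ∈ 𝒞, x ∈ V ∧ V ⊆ A := by
    intro A hA x hx
    obtain ⟨U, hUb, hxU, hUA⟩ := hb.exists_subset_of_mem_open hx hA
    have := h𝒯U ⟨U, hUb⟩ hxU
    simp only [mem_iUnion] at this
    obtain ⟨V, hV𝒯, hxV⟩ := this
    exact ⟨V, Or.inr (mem_iUnion.2 ⟨⟨U, hUb⟩, hV𝒯⟩), hxV,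
      (h𝒯cl ⟨U, hUb⟩ V hV𝒯).2.trans hUA⟩
  obtain ⟨Vf, hVf⟩ := h𝒞c.exists_eq_range ⟨∅, mem_insert _ _⟩
  have hVfmem : ∀ n, Vf n ∈ 𝒞 := fun n => hVf ▸ mem_range_self n
  refine ⟨fun x n => (Vf n).boolIndicator x, ?_, ?_⟩
  · exact continuous_pi fun n =>
      (continuous_boolIndicator_iff_isClopen _).2 (h𝒞cl _ (hVfmem n))
  · intro A hA
    refine ⟨⋃ n ∈ {n | Vf n ⊆ A}, {g : ℕ → Bool | g n = true}, ?_, ?_⟩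
    · refine isOpen_biUnion fun n _ => ?_
      have : {g : ℕ → Bool | g n = true} = (fun g : ℕ → Bool => g n) ⁻¹' {true} := rfl
      rw [this]
      exact (isOpen_discrete {true}).preimage (continuous_apply n)
    · ext x
      simp only [mem_preimage, mem_iUnion, mem_setOf_eq]
      constructor
      · rintro ⟨n, hnA, hxn⟩
        exact hnA (((Vf n).mem_iff_boolIndicator x).2 hxn)
      · intro hx
        obtain ⟨V, hV𝒞, hxV, hVA⟩ := h𝒞basis A hA x hx
        obtain ⟨n, rfl⟩ : ∃ n, Vf n = V := by
          have := hVf ▸ hV𝒞; exact this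
        exact ⟨n, hVA, ((Vf n).mem_iff_boolIndicator x).1 hxV⟩

/-- A copy of Cantor space inside `Z` gives a good map from Cantor space to `Z`. -/
lemma exists_goodmap_from_cantor {Z : Type*} [TopologicalSpace Z]
    (hK : ∃ K : Set Z, Nonempty (K ≃ₜ (ℕ → Bool))) :
    ∃ m : (ℕ → Bool) → Z, GoodMap m := by
  obtain ⟨K, ⟨f⟩⟩ := hK
  refine ⟨fun g => (f.symm g : Z), ⟨continuous_subtype_val.comp f.symm.continuous, ?_⟩⟩
  intro A hA
  have hfA : IsOpen (f ⁻¹' A) := f.continuous.isOpen_preimage A hA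
  obtain ⟨B, hB, hBA⟩ := isOpen_induced_iff.1 hfA
  refine ⟨B, hB, ?_⟩
  ext g
  simp only [mem_preimage]
  constructor
  · intro hg
    have : f.symm g ∈ Subtype.val ⁻¹' B := hg
    rw [hBA] at this
    simpa using this
  · intro hg
    have : f.symm g ∈ f ⁻¹' A := by simpa using hg
    rw [← hBA] at this
    exact this

theorem stmt14 {Z W : Type*} [TopologicalSpace Z] [TopologicalSpace W]
    [TopologicalSpace.MetrizableSpace Z] [SecondCountableTopology Z]
    [TopologicalSpace.MetrizableSpace W] [SecondCountableTopology W]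
    (hneZ : Nonempty Z) (hneW : Nonempty W)
    (hzdZ : ∀ x : Z, ∀ U : Set Z, IsOpen U → x ∈ U → ∃ V : Set Z, IsClopen V ∧ x ∈ V ∧ V ⊆ U)
    (hzdW : ∀ x : W, ∀ U : Set W, IsOpen U → x ∈ U → ∃ V : Set W, IsClopen V ∧ x ∈ V ∧ V ⊆ U)
    (hKZ : ∃ K : Set Z, Nonempty (K ≃ₜ (ℕ → Bool)))
    (hKW : ∃ K : Set W, Nonempty (K ≃ₜ (ℕ → Bool)))
    (D E : Set (Set ℕ)) :
    (GammaD D : Set (Set Z)) ⊆ GammaD E ↔ (GammaD D : Set (Set W)) ⊆ GammaD E := by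
  obtain ⟨eZ, heZ⟩ := exists_goodmap_to_cantor hzdZ
  obtain ⟨eW, heW⟩ := exists_goodmap_to_cantor hzdW
  obtain ⟨mZ, hmZ⟩ := exists_goodmap_from_cantor hKZ
  obtain ⟨mW, hmW⟩ := exists_goodmap_from_cantor hKW
  constructor
  · intro h
    exact goodmap_transfer heW (goodmap_transfer hmZ h)
  · intro h
    exact goodmap_transfer heZ (goodmap_transfer hmW h)
end
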